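/- Let {T_n} be the tribonacci numbers. For every integer n ≥ 1, the Toeplitz–Hessenberg determinant det(−1; T_0, T_1, …, T_{n−1}) equals ⌊(2^n + 6)/14⌋. -/

import Mathlib

def THdet (a : ℕ → ℤ) (n : ℕ) : ℤ :=
  (Matrix.of fun i j : Fin n => if (j : ℕ) ≤ (i : ℕ) + 1 then a ((i : ℕ) + 1 - (j : ℕ)) else 0).det

def trib : ℕ → ℤ
  | 0 => 0
  | 1 => 0
  | 2 => 1
  | n + 3 => trib (n + 2) + trib (n + 1) + trib n

namespace Stmt2Aux

def MX (a : ℕ → ℤ) (n : ℕ) : Matrix (Fin n) (Fin n) ℤ :=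
  Matrix.of fun i j : Fin n => if (j : ℕ) ≤ (i : ℕ) + 1 then a ((i : ℕ) + 1 - (j : ℕ)) else 0

lemma THdet_eq (a : ℕ → ℤ) (n : ℕ) : THdet a n = (MX a n).det := rfl

lemma val_succAbove {n : ℕ} (p : Fin (n+1)) (j : Fin n) :
    ((p.succAbove j : Fin (n+1)) : ℕ) = if (j:ℕ) < (p:ℕ) then (j:ℕ) else (j:ℕ)+1 := by
  rcases lt_or_ge (j:ℕ) (p:ℕ) with h | h
  · rw [Fin.succAbove_of_castSucc_lt _ _ (by simpa [Fin.lt_def] using h)]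
    simp [h]
  · rw [Fin.succAbove_of_le_castSucc _ _ (by simpa [Fin.le_def] using h)]
    simp [Fin.val_succ, Nat.not_lt.2 h]

lemma minor_det (a : ℕ → ℤ) : ∀ (i n : ℕ) (h : i ≤ n),
    ((MX a (n+1)).submatrix (Fin.succAbove ⟨i, Nat.lt_succ_of_le h⟩) Fin.succ).det
      = a 0 ^ i * (MX a (n-i)).det := by
  intro i
  induction i with
  | zero =>
    intro n h
    have hM : (MX a (n+1)).submatrix (Fin.succAbove ⟨0, Nat.lt_succ_of_le h⟩) Fin.succ
        = MX a n := by
      ext r c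
      have hv : ((Fin.succAbove (⟨0, Nat.lt_succ_of_le h⟩ : Fin (n+1)) r : Fin (n+1)) : ℕ)
          = (r:ℕ)+1 := by
        rw [val_succAbove]; simp
      simp only [Matrix.submatrix_apply, MX, Matrix.of_apply, hv, Fin.val_succ]
      by_cases hc : (c:ℕ) ≤ (r:ℕ)+1
      · rw [if_pos (by omega), if_pos hc]
        congr 1
        omega
      · rw [if_neg (by omega), if_neg hc]
    rw [hM]
    simp
  | succ i ih =>
    intro n h
    obtain ⟨m, rfl⟩ : ∃ m, n = m + 1 := ⟨n - 1, by omega⟩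
    have him : i ≤ m := by omega
    set p : Fin (m+2) := ⟨i+1, Nat.lt_succ_of_le h⟩ with hp
    rw [Matrix.det_succ_row_zero]
    have hA0 : ∀ j : Fin (m+1),
        ((MX a (m+1+1)).submatrix (Fin.succAbove p) Fin.succ) 0 j
          = if j = 0 then a 0 else 0 := by
      intro j
      have hv : ((p.succAbove 0 : Fin (m+2)) : ℕ) = 0 := by
        rw [val_succAbove]; simp [hp]
      simp only [Matrix.submatrix_apply, MX, Matrix.of_apply, hv, Fin.val_succ]
      by_cases hj : j = 0
      · subst hj; simp
      · have hj' : (j:ℕ) ≠ 0 := fun h' => hj (Fin.ext (by rw [h']; simp))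
        rw [if_neg (by omega), if_neg hj]
    rw [Finset.sum_eq_single (0 : Fin (m+1))]
    · have hkey : ((MX a (m+1+1)).submatrix (Fin.succAbove p) Fin.succ).submatrix
          Fin.succ (Fin.succAbove (0 : Fin (m+1)))
          = (MX a (m+1)).submatrix (Fin.succAbove ⟨i, Nat.lt_succ_of_le him⟩) Fin.succ := by
        ext r c
        have hu : ((Fin.succAbove (⟨i, Nat.lt_succ_of_le him⟩ : Fin (m+1)) r : Fin (m+1)) : ℕ)
            = if (r:ℕ) < i then (r:ℕ) else (r:ℕ)+1 := by
          rw [val_succAbove]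
        have hv : ((p.succAbove r.succ : Fin (m+2)) : ℕ)
            = ((Fin.succAbove (⟨i, Nat.lt_succ_of_le him⟩ : Fin (m+1)) r : Fin (m+1)) : ℕ) + 1 := by
          rw [val_succAbove, hu]
          simp only [Fin.val_succ, hp]
          split_ifs <;> omega
        simp only [Matrix.submatrix_apply, MX, Matrix.of_apply, Fin.succAbove_zero,
          Fin.val_succ, hv]
        set u := ((Fin.succAbove (⟨i, Nat.lt_succ_of_le him⟩ : Fin (m+1)) r : Fin (m+1)) : ℕ)
        by_cases hc : (c:ℕ) + 1 ≤ u + 1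
        · rw [if_pos (by omega), if_pos (by omega)]
          congr 1
          omega
        · rw [if_neg (by omega), if_neg (by omega)]
      rw [hA0, hkey, ih m him]
      have hnn : m + 1 - (i+1) = m - i := by omega
      rw [hnn]
      simp [pow_succ]
      ring
    · intro j _ hj
      rw [hA0, if_neg hj]
      ring
    · intro hmem
      exact absurd (Finset.mem_univ _) hmem

lemma THdet_succ (a : ℕ → ℤ) (n : ℕ) :
    THdet a (n+1)
      = ∑ i ∈ Finset.range (n+1), (-1)^i * a (i+1) * (a 0 ^ i * THdet a (n - i)) := by
  rw [THdet_eq, Matrix.det_succ_column_zero]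
  rw [← Fin.sum_univ_eq_sum_range (fun i => (-1:ℤ)^i * a (i+1) * (a 0 ^ i * THdet a (n - i)))]
  apply Finset.sum_congr rfl
  intro i _
  have h : (i:ℕ) ≤ n := Nat.lt_succ_iff.mp i.isLt
  have hmd := minor_det a i n h
  have hpiv : (⟨(i:ℕ), Nat.lt_succ_of_le h⟩ : Fin (n+1)) = i := by
    exact Fin.eta i _
  rw [hpiv] at hmd
  rw [hmd]
  have hent : MX a (n+1) i 0 = a ((i:ℕ)+1) := by
    simp [MX]
  rw [hent, THdet_eq]

def aT : ℕ → ℤ := fun k => if k = 0 then -1 else trib (k - 1)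

def DD (n : ℕ) : ℤ := THdet aT n

lemma convB (n : ℕ) : DD (n+1) = ∑ m ∈ Finset.range (n+1), trib (n - m) * DD m := by
  have h1 : DD (n+1) = ∑ i ∈ Finset.range (n+1), trib i * DD (n - i) := by
    rw [DD, THdet_succ]
    apply Finset.sum_congr rfl
    intro i hi
    have ha0 : aT 0 = -1 := rfl
    have hai : aT (i+1) = trib i := by simp [aT]
    rw [ha0, hai]
    have hsq : ((-1:ℤ)^i) * ((-1:ℤ)^i) = 1 := by
      rw [← pow_add, ← two_mul, pow_mul]
      norm_num
    calc (-1:ℤ)^i * trib i * ((-1)^i * THdet aT (n - i))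
        = ((-1:ℤ)^i * (-1)^i) * (trib i * THdet aT (n-i)) := by ring
      _ = trib i * DD (n-i) := by rw [hsq, DD]; ring
  rw [h1, ← Finset.sum_range_reflect]
  apply Finset.sum_congr rfl
  intro m hm
  have hm' : m ≤ n := by
    have := Finset.mem_range.mp hm; omega
  have e1 : n + 1 - 1 - m = n - m := by omega
  have e2 : n - (n - m) = m := by omega
  rw [e1, e2]

lemma trib0 : trib 0 = 0 := rfl
lemma trib1 : trib 1 = 0 := rfl
lemma trib2 : trib 2 = 1 := rfl
lemma trib3 : trib 3 = 1 := by
  rw [show (3 : ℕ) = 0 + 3 from rfl, trib, trib0, trib1, trib2]; norm_num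

lemma DD0 : DD 0 = 1 := Matrix.det_fin_zero
lemma DD1 : DD 1 = 0 := by rw [convB]; simp [trib0]
lemma DD2 : DD 2 = 0 := by
  rw [convB]
  simp [Finset.sum_range_succ, trib0, trib1, DD1]
lemma DD3 : DD 3 = 1 := by
  rw [convB]
  simp [Finset.sum_range_succ, trib0, trib1, trib2, DD0, DD1, DD2]
lemma DD4 : DD 4 = 1 := by
  rw [convB]
  simp [Finset.sum_range_succ, trib0, trib1, trib2, trib3, DD0, DD1, DD2, DD3]

lemma Drec (n : ℕ) : DD (n+4) = DD (n+3) + DD (n+2) + 2 * DD (n+1) := by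
  have h4 : DD (n+4) = ∑ m ∈ Finset.range (n+1), trib (n+3-m) * DD m + DD (n+1) := by
    rw [show n + 4 = (n+3) + 1 from rfl, convB]
    rw [Finset.sum_range_succ, Finset.sum_range_succ, Finset.sum_range_succ]
    have e1 : n + 3 - (n+3) = 0 := by omega
    have e2 : n + 3 - (n+2) = 1 := by omega
    have e3 : n + 3 - (n+1) = 2 := by omega
    rw [e1, e2, e3, trib0, trib1, trib2]
    ring
  have h3 : DD (n+3) = ∑ m ∈ Finset.range (n+1), trib (n+2-m) * DD m := by
    rw [show n + 3 = (n+2) + 1 from rfl, convB]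
    rw [Finset.sum_range_succ, Finset.sum_range_succ]
    have e1 : n + 2 - (n+2) = 0 := by omega
    have e2 : n + 2 - (n+1) = 1 := by omega
    rw [e1, e2, trib0, trib1]
    ring
  have h2 : DD (n+2) = ∑ m ∈ Finset.range (n+1), trib (n+1-m) * DD m := by
    rw [show n + 2 = (n+1) + 1 from rfl, convB]
    rw [Finset.sum_range_succ]
    have e1 : n + 1 - (n+1) = 0 := by omega
    rw [e1, trib0]
    ring
  have hsplit : ∑ m ∈ Finset.range (n+1), trib (n+3-m) * DD m
      = ∑ m ∈ Finset.range (n+1), trib (n+2-m) * DD m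
        + ∑ m ∈ Finset.range (n+1), trib (n+1-m) * DD m
        + ∑ m ∈ Finset.range (n+1), trib (n-m) * DD m := by
    rw [← Finset.sum_add_distrib, ← Finset.sum_add_distrib]
    apply Finset.sum_congr rfl
    intro m hm
    have hm' : m ≤ n := by
      have := Finset.mem_range.mp hm; omega
    have e0 : n + 3 - m = (n - m) + 3 := by omega
    have ea : (n - m) + 2 = n + 2 - m := by omega
    have eb : (n - m) + 1 = n + 1 - m := by omega
    rw [e0, trib, ea, eb]
    ring
  rw [h4, h3, h2, hsplit, convB n]
  ring

lemma key_floor (m : ℕ) (b e : ℤ) (h0 : 0 ≤ e) (h14 : e < 14)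
    (hm : (2:ℤ)^m + 6 = 14*b + e) : ⌊((2:ℚ)^m + 6) / 14⌋ = b := by
  have h2 : ((2:ℚ)^m + 6) = (((2:ℤ)^m + 6 : ℤ) : ℚ) := by push_cast; ring
  rw [h2, hm]
  rw [Int.floor_eq_iff]
  push_cast
  have h0' : (0:ℚ) ≤ (e:ℚ) := by exact_mod_cast h0
  have h14' : (e:ℚ) < 14 := by exact_mod_cast h14
  constructor
  · rw [le_div_iff₀ (by norm_num : (0:ℚ) < 14)]
    linarith
  · rw [div_lt_iff₀ (by norm_num : (0:ℚ) < 14)]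
    linarith

lemma pow_rep (n : ℕ) : ∃ a : ℤ,
    (2:ℤ)^(n+1) = 14*a+2 ∨ (2:ℤ)^(n+1) = 14*a+4 ∨ (2:ℤ)^(n+1) = 14*a+8 := by
  induction n with
  | zero => exact ⟨0, Or.inl (by norm_num)⟩
  | succ n ih =>
    obtain ⟨a, h | h | h⟩ := ih
    · exact ⟨2*a, Or.inr (Or.inl (by rw [pow_succ, h]; ring))⟩
    · exact ⟨2*a, Or.inr (Or.inr (by rw [pow_succ, h]; ring))⟩
    · exact ⟨2*a+1, Or.inl (by rw [pow_succ, h]; ring)⟩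

lemma grec (n : ℕ) : ⌊((2:ℚ)^(n+4) + 6) / 14⌋
    = ⌊((2:ℚ)^(n+3) + 6) / 14⌋ + ⌊((2:ℚ)^(n+2) + 6) / 14⌋ + 2 * ⌊((2:ℚ)^(n+1) + 6) / 14⌋ := by
  obtain ⟨a, h | h | h⟩ := pow_rep n
  · have p2 : (2:ℤ)^(n+2) = 14*(2*a)+4 := by rw [pow_succ, h]; ring
    have p3 : (2:ℤ)^(n+3) = 14*(4*a)+8 := by
      rw [show n+3 = (n+2)+1 from rfl, pow_succ, p2]; ring
    have p4 : (2:ℤ)^(n+4) = 14*(8*a+1)+2 := by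
      rw [show n+4 = (n+3)+1 from rfl, pow_succ, p3]; ring
    rw [key_floor (n+1) a 8 (by norm_num) (by norm_num) (by linarith),
        key_floor (n+2) (2*a) 10 (by norm_num) (by norm_num) (by linarith),
        key_floor (n+3) (4*a+1) 0 (by norm_num) (by norm_num) (by linarith),
        key_floor (n+4) (8*a+1) 8 (by norm_num) (by norm_num) (by linarith)]
    ring
  · have p2 : (2:ℤ)^(n+2) = 14*(2*a)+8 := by rw [pow_succ, h]; ring
    have p3 : (2:ℤ)^(n+3) = 14*(4*a+1)+2 := by
      rw [show n+3 = (n+2)+1 from rfl, pow_succ, p2]; ring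
    have p4 : (2:ℤ)^(n+4) = 14*(8*a+2)+4 := by
      rw [show n+4 = (n+3)+1 from rfl, pow_succ, p3]; ring
    rw [key_floor (n+1) a 10 (by norm_num) (by norm_num) (by linarith),
        key_floor (n+2) (2*a+1) 0 (by norm_num) (by norm_num) (by linarith),
        key_floor (n+3) (4*a+1) 8 (by norm_num) (by norm_num) (by linarith),
        key_floor (n+4) (8*a+2) 10 (by norm_num) (by norm_num) (by linarith)]
    ring
  · have p2 : (2:ℤ)^(n+2) = 14*(2*a+1)+2 := by rw [pow_succ, h]; ring
    have p3 : (2:ℤ)^(n+3) = 14*(4*a+2)+4 := by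
      rw [show n+3 = (n+2)+1 from rfl, pow_succ, p2]; ring
    have p4 : (2:ℤ)^(n+4) = 14*(8*a+4)+8 := by
      rw [show n+4 = (n+3)+1 from rfl, pow_succ, p3]; ring
    rw [key_floor (n+1) (a+1) 0 (by norm_num) (by norm_num) (by linarith),
        key_floor (n+2) (2*a+1) 8 (by norm_num) (by norm_num) (by linarith),
        key_floor (n+3) (4*a+2) 10 (by norm_num) (by norm_num) (by linarith),
        key_floor (n+4) (8*a+5) 0 (by norm_num) (by norm_num) (by linarith)]
    ring

lemma main' : ∀ n : ℕ, DD (n+1) = ⌊((2:ℚ)^(n+1) + 6) / 14⌋ := by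
  intro n
  induction n using Nat.strong_induction_on with
  | _ n ih =>
    rcases n with _ | _ | _ | _ | m
    · rw [DD1, key_floor 1 0 8 (by norm_num) (by norm_num) (by norm_num)]
    · rw [DD2, key_floor 2 0 10 (by norm_num) (by norm_num) (by norm_num)]
    · rw [DD3, key_floor 3 1 0 (by norm_num) (by norm_num) (by norm_num)]
    · rw [DD4, key_floor 4 1 8 (by norm_num) (by norm_num) (by norm_num)]
    · have h1 := ih (m+3) (by omega)
      have h2 := ih (m+2) (by omega)
      have h3 := ih (m+1) (by omega)
      have hd := Drec (m+1)
      have hg := grec (m+1)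
      rw [show m + 4 + 1 = (m+1) + 4 from rfl]
      rw [hd]
      rw [show (m+1)+3 = (m+3)+1 from rfl, h1, show (m+1)+2 = (m+2)+1 from rfl, h2,
          show (m+1)+1 = (m+1)+1 from rfl, h3]
      rw [show (m+1)+4 = (m+1)+4 from rfl] at hg
      rw [show (m+3)+1 = (m+1)+3 from rfl, show (m+2)+1 = (m+1)+2 from rfl]
      linarith [hg]

end Stmt2Aux

theorem stmt_2 (n : ℕ) (hn : 1 ≤ n) :
    THdet (fun k => if k = 0 then -1 else trib (k - 1)) n =
      ⌊((2 : ℚ) ^ n + 6) / 14⌋ := by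
  obtain ⟨m, rfl⟩ : ∃ m, n = m + 1 := ⟨n - 1, by omega⟩
  exact Stmt2Aux.main' m
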